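/- Let γ > 0 and z ∈ ℝ². Define the shrinkage shrink_γ(z) := (max(‖z‖₂ − γ, 0)/‖z‖₂)·z when z ≠ 0 and shrink_γ(0) := 0. Then shrink_γ(z) is the unique global minimizer over ℝ² of the function p ↦ γ‖p‖₂ + (1/2)‖p − z‖₂². In particular, the minimizer is 0 if and only if ‖z‖₂ ≤ γ. -/

import Mathlib

private lemma shrink_aux_cs (nz : ℝ) (z p : ℝ × ℝ)
    (hnz2 : nz ^ 2 = z.1 ^ 2 + z.2 ^ 2) (hnz0 : 0 ≤ nz) :
    p.1 * z.1 + p.2 * z.2 ≤ Real.sqrt (p.1 ^ 2 + p.2 ^ 2) * nz := by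
  have hnp2 : Real.sqrt (p.1 ^ 2 + p.2 ^ 2) ^ 2 = p.1 ^ 2 + p.2 ^ 2 :=
    Real.sq_sqrt (by positivity)
  have hnp0 : 0 ≤ Real.sqrt (p.1 ^ 2 + p.2 ^ 2) := Real.sqrt_nonneg _
  nlinarith [sq_nonneg (p.1 * z.2 - p.2 * z.1), mul_nonneg hnp0 hnz0,
    sq_nonneg (Real.sqrt (p.1 ^ 2 + p.2 ^ 2) * nz - (p.1 * z.1 + p.2 * z.2))]

private lemma shrink_aux1 (γ nz np : ℝ) (z p : ℝ × ℝ)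
    (hnp2 : np ^ 2 = p.1 ^ 2 + p.2 ^ 2) (hnp0 : 0 ≤ np)
    (hcs : p.1 * z.1 + p.2 * z.2 ≤ np * nz)
    (hle : nz ≤ γ) :
    (1/2) * (z.1 ^ 2 + z.2 ^ 2) ≤ γ * np + (1/2) * ((p.1 - z.1) ^ 2 + (p.2 - z.2) ^ 2) ∧
    (γ * np + (1/2) * ((p.1 - z.1) ^ 2 + (p.2 - z.2) ^ 2) = (1/2) * (z.1 ^ 2 + z.2 ^ 2)
      → p = 0) := by
  constructor
  · nlinarith [mul_nonneg hnp0 (sub_nonneg.mpr hle)]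
  · intro heq
    have hp2 : p.1 ^ 2 + p.2 ^ 2 ≤ 0 := by
      nlinarith [mul_nonneg hnp0 (sub_nonneg.mpr hle)]
    have h1 : p.1 = 0 := by nlinarith [sq_nonneg p.1, sq_nonneg p.2]
    have h2 : p.2 = 0 := by nlinarith [sq_nonneg p.1, sq_nonneg p.2]
    exact Prod.ext h1 h2

private lemma shrink_aux2 (γ nz np : ℝ) (z p : ℝ × ℝ)
    (hγ : 0 < γ) (hlt : γ < nz)
    (hnz2 : nz ^ 2 = z.1 ^ 2 + z.2 ^ 2)
    (hnp2 : np ^ 2 = p.1 ^ 2 + p.2 ^ 2) (hnp0 : 0 ≤ np)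
    (hcs : p.1 * z.1 + p.2 * z.2 ≤ np * nz) :
    γ * (nz - γ) + (1/2) * γ ^ 2 ≤ γ * np + (1/2) * ((p.1 - z.1) ^ 2 + (p.2 - z.2) ^ 2) ∧
    (γ * np + (1/2) * ((p.1 - z.1) ^ 2 + (p.2 - z.2) ^ 2) = γ * (nz - γ) + (1/2) * γ ^ 2
      → p.1 = ((nz - γ) / nz) * z.1 ∧ p.2 = ((nz - γ) / nz) * z.2) := by
  have hnzpos : 0 < nz := lt_trans hγ hlt
  constructor
  · nlinarith [sq_nonneg (np - (nz - γ))]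
  · intro heq
    have h1 : np = nz - γ := by nlinarith [sq_nonneg (np - (nz - γ))]
    have h2 : p.1 * z.1 + p.2 * z.2 = np * nz := by
      nlinarith [sq_nonneg (np - (nz - γ))]
    have hsq : (nz * p.1 - np * z.1) ^ 2 + (nz * p.2 - np * z.2) ^ 2 = 0 := by
      linear_combination -nz ^ 2 * hnp2 - np ^ 2 * hnz2 - 2 * np * nz * h2
    have e1 : nz * p.1 - np * z.1 = 0 := by
      have h' : (nz * p.1 - np * z.1) ^ 2 = 0 := by
        nlinarith [sq_nonneg (nz * p.1 - np * z.1), sq_nonneg (nz * p.2 - np * z.2)]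
      exact pow_eq_zero_iff two_ne_zero |>.mp h'
    have e2 : nz * p.2 - np * z.2 = 0 := by
      have h' : (nz * p.2 - np * z.2) ^ 2 = 0 := by
        nlinarith [sq_nonneg (nz * p.1 - np * z.1), sq_nonneg (nz * p.2 - np * z.2)]
      exact pow_eq_zero_iff two_ne_zero |>.mp h'
    have hnzne : nz ≠ 0 := ne_of_gt hnzpos
    constructor
    · rw [div_mul_eq_mul_div, eq_div_iff hnzne]
      linear_combination e1 + z.1 * h1
    · rw [div_mul_eq_mul_div, eq_div_iff hnzne]
      linear_combination e2 + z.2 * h1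

/-- The shrinkage `shrink_γ(z) = (max(‖z‖₂ − γ, 0)/‖z‖₂)·z` (and `0` at `z = 0`)
is the unique global minimizer over `ℝ²` of `p ↦ γ‖p‖₂ + (1/2)‖p − z‖₂²`;
in particular the minimizer is `0` iff `‖z‖₂ ≤ γ`. -/
theorem shrinkage_unique_minimizer (γ : ℝ) (hγ : 0 < γ) (z : ℝ × ℝ)
    (shrink : ℝ × ℝ)
    (hshrink : shrink = if z = 0 then 0
        else (max (Real.sqrt (z.1 ^ 2 + z.2 ^ 2) - γ) 0
               / Real.sqrt (z.1 ^ 2 + z.2 ^ 2)) • z)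
    (F : ℝ × ℝ → ℝ)
    (hF : F = fun p => γ * Real.sqrt (p.1 ^ 2 + p.2 ^ 2)
        + (1 / 2) * ((p.1 - z.1) ^ 2 + (p.2 - z.2) ^ 2)) :
    (∀ p : ℝ × ℝ, F shrink ≤ F p ∧ (F p = F shrink → p = shrink)) ∧
      (shrink = 0 ↔ Real.sqrt (z.1 ^ 2 + z.2 ^ 2) ≤ γ) := by
  have hz2 : (0:ℝ) ≤ z.1 ^ 2 + z.2 ^ 2 := by positivity
  have hnz2 : Real.sqrt (z.1 ^ 2 + z.2 ^ 2) ^ 2 = z.1 ^ 2 + z.2 ^ 2 := Real.sq_sqrt hz2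
  have hnz0 : 0 ≤ Real.sqrt (z.1 ^ 2 + z.2 ^ 2) := Real.sqrt_nonneg _
  set nz := Real.sqrt (z.1 ^ 2 + z.2 ^ 2) with hnz_def
  by_cases hle : nz ≤ γ
  · -- shrink = 0
    have hs0 : shrink = 0 := by
      rw [hshrink]
      by_cases hz : z = 0
      · simp [hz]
      · simp only [hz, if_false, ← hnz_def]
        rw [max_eq_right (by linarith)]
        simp
    have hF0 : F shrink = (1/2) * (z.1 ^ 2 + z.2 ^ 2) := by
      rw [hs0, hF]; simp
    refine ⟨fun p => ?_, ⟨fun _ => hle, fun _ => hs0⟩⟩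
    have hnp2 : Real.sqrt (p.1 ^ 2 + p.2 ^ 2) ^ 2 = p.1 ^ 2 + p.2 ^ 2 :=
      Real.sq_sqrt (by positivity)
    have hnp0 : 0 ≤ Real.sqrt (p.1 ^ 2 + p.2 ^ 2) := Real.sqrt_nonneg _
    have hcs := shrink_aux_cs nz z p hnz2 hnz0
    obtain ⟨ha, hb⟩ := shrink_aux1 γ nz (Real.sqrt (p.1 ^ 2 + p.2 ^ 2)) z p hnp2 hnp0 hcs hle
    have hFp : F p = γ * Real.sqrt (p.1 ^ 2 + p.2 ^ 2)
        + (1/2) * ((p.1 - z.1) ^ 2 + (p.2 - z.2) ^ 2) := by rw [hF]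
    refine ⟨by rw [hF0, hFp]; exact ha, fun heq => ?_⟩
    rw [hF0, hFp] at heq
    rw [hs0]
    exact hb heq
  · push_neg at hle
    have hnzpos : 0 < nz := lt_trans hγ hle
    have hnzne : nz ≠ 0 := ne_of_gt hnzpos
    have hz : z ≠ 0 := by
      intro h
      rw [h] at hnz_def
      simp at hnz_def
      rw [hnz_def] at hnzpos
      exact lt_irrefl 0 hnzpos
    have hc : shrink = ((nz - γ) / nz) • z := by
      rw [hshrink]
      simp only [hz, if_false, ← hnz_def]
      rw [max_eq_left (by linarith)]
    have hs1 : shrink.1 = ((nz - γ) / nz) * z.1 := by rw [hc]; rfl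
    have hs2 : shrink.2 = ((nz - γ) / nz) * z.2 := by rw [hc]; rfl
    have hsn : shrink.1 ^ 2 + shrink.2 ^ 2 = (nz - γ) ^ 2 := by
      rw [hs1, hs2]
      field_simp
      linear_combination -hnz2
    have hsd : (shrink.1 - z.1) ^ 2 + (shrink.2 - z.2) ^ 2 = γ ^ 2 := by
      rw [hs1, hs2]
      field_simp
      linear_combination -γ ^ 2 * hnz2
    have hFs : F shrink = γ * (nz - γ) + (1/2) * γ ^ 2 := by
      rw [hF]
      simp only
      rw [hsn, hsd, Real.sqrt_sq (by linarith)]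
    refine ⟨fun p => ?_, ?_⟩
    · have hnp2 : Real.sqrt (p.1 ^ 2 + p.2 ^ 2) ^ 2 = p.1 ^ 2 + p.2 ^ 2 :=
        Real.sq_sqrt (by positivity)
      have hnp0 : 0 ≤ Real.sqrt (p.1 ^ 2 + p.2 ^ 2) := Real.sqrt_nonneg _
      have hcs := shrink_aux_cs nz z p hnz2 hnz0
      obtain ⟨ha, hb⟩ := shrink_aux2 γ nz (Real.sqrt (p.1 ^ 2 + p.2 ^ 2)) z p hγ hle
        hnz2 hnp2 hnp0 hcs
      have hFp : F p = γ * Real.sqrt (p.1 ^ 2 + p.2 ^ 2)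
          + (1/2) * ((p.1 - z.1) ^ 2 + (p.2 - z.2) ^ 2) := by rw [hF]
      refine ⟨by rw [hFs, hFp]; exact ha, fun heq => ?_⟩
      rw [hFs, hFp] at heq
      obtain ⟨e1, e2⟩ := hb heq
      exact Prod.ext (by rw [hs1]; exact e1) (by rw [hs2]; exact e2)
    · constructor
      · intro h0
        exfalso
        have h' : shrink.1 ^ 2 + shrink.2 ^ 2 = 0 := by rw [h0]; simp
        rw [hsn] at h'
        nlinarith
      · intro h; linarith
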